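/- The number of F_{q^2}-rational affine points on the Hermitian curve x^q + x = y^{q+1} is exactly q^3. -/
import Mathlib

open Polynomial

private def Tmap {q : ℕ} (hq0 : q ≠ 0) {F : Type*} [Field F]
    (hadd : ∀ x y : F, (x + y) ^ q = x ^ q + y ^ q) : F →+ F where
  toFun x := x ^ q + x
  map_zero' := by simp [zero_pow hq0]
  map_add' x y := by
    show (x + y) ^ q + (x + y) = (x ^ q + x) + (y ^ q + y)
    rw [hadd]; ring

private lemma roots_card_le {F : Type*} [Field F] (f : F[X]) (hf : f ≠ 0) (S : Set F)
    (hS : ∀ x ∈ S, f.IsRoot x) : Nat.card S ≤ f.natDegree := by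
  classical
  have hsub : S ⊆ (f.roots.toFinset : Set F) := by
    intro x hx
    simp only [Finset.coe_sort_coe, Multiset.mem_toFinset, Finset.mem_coe]
    exact (Polynomial.mem_roots hf).2 (hS x hx)
  calc Nat.card S = S.ncard := Nat.card_coe_set_eq S
    _ ≤ (f.roots.toFinset : Set F).ncard := Set.ncard_le_ncard hsub (Finset.finite_toSet _)
    _ = f.roots.toFinset.card := Set.ncard_coe_finset _
    _ ≤ Multiset.card f.roots := Multiset.toFinset_card_le _
    _ ≤ f.natDegree := Polynomial.card_roots' f

private lemma herm_aux {q : ℕ} (hq2 : 2 ≤ q) {F : Type*} [Field F] [Fintype F]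
    (hF : Fintype.card F = q ^ 2)
    (hadd : ∀ x y : F, (x + y) ^ q = x ^ q + y ^ q) :
    Nat.card {p : F × F // p.1 ^ q + p.1 = p.2 ^ (q + 1)} = q ^ 3 := by
  classical
  have hq0 : q ≠ 0 := by omega
  have hq0' : 0 < q := by omega
  have hpow : ∀ x : F, (x ^ q) ^ q = x := by
    intro x
    rw [← pow_mul, ← pow_two, ← hF]
    exact FiniteField.pow_card x
  set T : F →+ F := Tmap hq0 hadd with hT
  have hTapp : ∀ x : F, T x = x ^ q + x := fun x => rfl
  -- kernel card ≤ q
  have hfdeg : (X ^ q + X : F[X]).natDegree = q := by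
    compute_degree
    all_goals first
      | omega
      | (rw [if_neg (show ¬ (1 = q) by omega)]; norm_num)
  have hfne : (X ^ q + X : F[X]) ≠ 0 := by
    intro h
    rw [h, Polynomial.natDegree_zero] at hfdeg
    omega
  have hker_le : Nat.card T.ker ≤ q := by
    have := roots_card_le (X ^ q + X : F[X]) hfne (T.ker : Set F) (by
      intro x hx
      have hx' : x ^ q + x = 0 := by
        have := hx
        rwa [SetLike.mem_coe, AddMonoidHom.mem_ker, hTapp] at this
      simp [Polynomial.IsRoot, hx'])
    rwa [hfdeg] at this
  -- fixed points of Frobenius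
  have hgdeg : (X ^ q - X : F[X]).natDegree = q := by
    compute_degree
    all_goals first
      | omega
      | (rw [if_neg (show ¬ (1 = q) by omega)]; norm_num)
  have hgne : (X ^ q - X : F[X]) ≠ 0 := by
    intro h
    rw [h, Polynomial.natDegree_zero] at hgdeg
    omega
  set Fix : Set F := {z : F | z ^ q = z} with hFix
  have hFix_le : Nat.card Fix ≤ q := by
    have := roots_card_le (X ^ q - X : F[X]) hgne Fix (by
      intro x hx
      have hx' : x ^ q = x := hx
      simp [Polynomial.IsRoot, hx'])
    rwa [hgdeg] at this
  -- range ⊆ Fix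
  have hrange_sub : (T.range : Set F) ⊆ Fix := by
    intro z hz
    obtain ⟨x, rfl⟩ := hz
    show (T x) ^ q = T x
    rw [hTapp, hadd, hpow]; ring
  have hrange_le : Nat.card T.range ≤ q := by
    calc Nat.card T.range = (T.range : Set F).ncard := Nat.card_coe_set_eq _
      _ ≤ Fix.ncard := Set.ncard_le_ncard hrange_sub (Set.toFinite _)
      _ = Nat.card Fix := (Nat.card_coe_set_eq _).symm
      _ ≤ q := hFix_le
  -- product
  have hprod : Nat.card T.range * Nat.card T.ker = q ^ 2 := by
    have h1 := AddSubgroup.card_eq_card_quotient_mul_card_addSubgroup T.ker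
    have h2 : Nat.card (F ⧸ T.ker) = Nat.card T.range :=
      Nat.card_congr (QuotientAddGroup.quotientKerEquivRange T).toEquiv
    rw [Nat.card_eq_fintype_card, hF, h2] at h1
    omega
  have hker_ge : q ≤ Nat.card T.ker := by
    have h1 : q * q ≤ q * Nat.card T.ker := by
      calc q * q = Nat.card T.range * Nat.card T.ker := by rw [hprod, pow_two]
        _ ≤ q * Nat.card T.ker := Nat.mul_le_mul_right _ hrange_le
    exact Nat.le_of_mul_le_mul_left h1 hq0'
  have hker_eq : Nat.card T.ker = q := le_antisymm hker_le hker_ge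
  have hrange_eq : Nat.card T.range = q := by
    have : Nat.card T.range * q = q * q := by rw [← hker_eq, hprod, pow_two, hker_eq]
    have := Nat.eq_of_mul_eq_mul_right hq0' this
    omega
  -- range = Fix
  have hrange_fix : (T.range : Set F) = Fix := by
    apply Set.eq_of_subset_of_ncard_le hrange_sub
    rw [← Nat.card_coe_set_eq, ← Nat.card_coe_set_eq]
    calc Nat.card Fix ≤ q := hFix_le
      _ = Nat.card T.range := hrange_eq.symm
  -- each norm value is in the range
  have hnorm : ∀ y : F, ∃ x : F, x ^ q + x = y ^ (q + 1) := by
    intro y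
    have hmem : y ^ (q + 1) ∈ Fix := by
      show (y ^ (q + 1)) ^ q = y ^ (q + 1)
      have h1 : (y ^ (q + 1)) ^ q = (y ^ q) ^ q * y ^ q := by
        rw [← pow_mul, ← pow_mul, ← pow_add]
        congr 1
        ring
      rw [h1, hpow]
      rw [pow_succ]
      ring
    rw [← hrange_fix] at hmem
    obtain ⟨x, hx⟩ := hmem
    refine ⟨x, ?_⟩
    rw [← hTapp]
    exact hx
  -- fiber count
  have fiber : ∀ c : F, (∃ x₀ : F, x₀ ^ q + x₀ = c) →
      Nat.card {x : F // x ^ q + x = c} = q := by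
    rintro c ⟨x₀, h₀⟩
    have key : Nat.card {x : F // x ^ q + x = c} = Nat.card T.ker := by
      apply Nat.card_congr
      refine ⟨fun x => ⟨x.1 - x₀, ?_⟩, fun z => ⟨z.1 + x₀, ?_⟩, ?_, ?_⟩
      · rw [AddMonoidHom.mem_ker, map_sub]
        have h1 : T x.1 = c := by rw [hTapp]; exact x.2
        have h2 : T x₀ = c := by rw [hTapp]; exact h₀
        rw [h1, h2, sub_self]
      · have hz : z.1 ^ q + z.1 = 0 := by
          have := z.2
          rwa [AddMonoidHom.mem_ker, hTapp] at this
        show (z.1 + x₀ : F) ^ q + (z.1 + x₀) = c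
        rw [hadd]
        have : z.1 ^ q + x₀ ^ q + (z.1 + x₀) = (z.1 ^ q + z.1) + (x₀ ^ q + x₀) := by ring
        rw [this, hz, h₀, zero_add]
      · intro x; ext; simp
      · intro z; ext; simp
    rw [key, hker_eq]
  -- assemble
  have e : {p : F × F // p.1 ^ q + p.1 = p.2 ^ (q + 1)} ≃
      Σ y : F, {x : F // x ^ q + x = y ^ (q + 1)} :=
    { toFun := fun p => ⟨p.1.2, p.1.1, p.2⟩
      invFun := fun s => ⟨(s.2.1, s.1), s.2.2⟩
      left_inv := fun p => rfl
      right_inv := fun s => rfl }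
  rw [Nat.card_congr e, Nat.card_eq_fintype_card, Fintype.card_sigma]
  have hfib : ∀ y : F, Fintype.card {x : F // x ^ q + x = y ^ (q + 1)} = q := by
    intro y
    rw [← Nat.card_eq_fintype_card]
    exact fiber _ (hnorm y)
  simp only [hfib, Finset.sum_const, Finset.card_univ, hF, smul_eq_mul]
  ring

/-- The Hermitian curve `x^q + x = y^(q+1)` has exactly `q^3` affine `F_{q^2}`-rational points. -/
theorem stmt_2 {q : ℕ} (hq : IsPrimePow q) {F : Type*} [Field F] [Fintype F]
    (hF : Fintype.card F = q ^ 2) :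
    Nat.card {p : F × F // p.1 ^ q + p.1 = p.2 ^ (q + 1)} = q ^ 3 := by
  classical
  obtain ⟨p, n, hp, hn, rfl⟩ := hq
  have hp' : p.Prime := hp.nat_prime
  have hq2 : 2 ≤ p ^ n := le_trans hp'.two_le (Nat.le_self_pow (by omega) p)
  obtain ⟨r, hr⟩ := CharP.exists F
  haveI := hr
  have hrprime : r.Prime := CharP.char_is_prime F r
  obtain ⟨m, _, hcard⟩ := FiniteField.card F r
  have heq : r ^ (m : ℕ) = p ^ (2 * n) := by
    rw [← hcard, hF, ← pow_mul, mul_comm]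
  have hpr : p = r := by
    have hdvd : p ∣ r ^ (m : ℕ) := by
      rw [heq]
      exact dvd_pow_self p (by omega)
    have := hp'.dvd_of_dvd_pow hdvd
    exact ((Nat.prime_dvd_prime_iff_eq hp' hrprime).1 this)
  subst hpr
  haveI : Fact p.Prime := ⟨hp'⟩
  have hadd : ∀ x y : F, (x + y) ^ p ^ n = x ^ p ^ n + y ^ p ^ n := fun x y =>
    add_pow_char_pow x y p n
  exact herm_aux hq2 hF hadd
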